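/- For a constant matrix A ∈ ℂ^{n×n} (viewed as a T-periodic function), the point spectrum of 𝒜 − 𝒩 on ℓ²(ℤ, ℂⁿ) is exactly {λ_i + jkω : λ_i ∈ spec(A), k ∈ ℤ}, where 𝒜 = I_{ℓ²(ℤ)} ⊗-style block operator with A on the block diagonal and 𝒩 = diag over m of jmω I_n. -/

import Mathlib

open Matrix

/-- View a plain vector `Fin n → ℂ` as an element of `EuclideanSpace ℂ (Fin n)`. -/
noncomputable def vecE {n : ℕ} (v : Fin n → ℂ) : EuclideanSpace ℂ (Fin n) :=
  (WithLp.equiv 2 _).symm v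

lemma vecE_eq {n : ℕ} (v : Fin n → ℂ) : vecE v = v := rfl

/-- for a constant matrix `A`, the point spectrum of `𝒜 − 𝒩` on
`ℓ²(ℤ, ℂⁿ)` is exactly `{λᵢ + jkω : λᵢ ∈ spec(A), k ∈ ℤ}`. -/
theorem harmonic_point_spectrum_constant
    {n : ℕ} (T : ℝ) (hT : 0 < T) (A : Matrix (Fin n) (Fin n) ℂ) :
    ∀ μ : ℂ,
      (∃ X : ℤ → EuclideanSpace ℂ (Fin n),
        Memℓp X 2 ∧ X ≠ 0 ∧
        ∀ m : ℤ,
          vecE (A.mulVec (X m))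
            - (Complex.I * (m : ℂ) * ((2 * Real.pi / T : ℝ) : ℂ)) • X m = μ • X m)
      ↔ (∃ (lam : ℂ) (k : ℤ),
          (∃ v : Fin n → ℂ, v ≠ 0 ∧ A.mulVec v = lam • v) ∧
          μ = lam + Complex.I * (k : ℂ) * ((2 * Real.pi / T : ℝ) : ℂ)) := by
  intro μ
  set ω : ℂ := ((2 * Real.pi / T : ℝ) : ℂ) with hω
  constructor
  · rintro ⟨X, _hmem, hX0, hX⟩
    obtain ⟨m, hm⟩ : ∃ m, X m ≠ 0 := by
      by_contra h
      push_neg at h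
      exact hX0 (funext h)
    refine ⟨μ + Complex.I * (m : ℂ) * ω, -m, ⟨X m, fun h => hm (by simpa using congrArg (WithLp.toLp 2) h), ?_⟩, ?_⟩
    · have h := hX m
      have h2 : vecE (A.mulVec (X m)) = (μ + Complex.I * (m : ℂ) * ω) • X m := by
        rw [add_smul]
        rw [← h]
        ring_nf
        abel
      simpa [vecE] using congrArg WithLp.ofLp h2
    · push_cast
      ring
  · rintro ⟨lam, k, ⟨v, hv0, hv⟩, hμ⟩
    classical
    refine ⟨fun m => if m = -k then vecE v else 0, ?_, ?_, ?_⟩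
    · have : Memℓp (⇑(lp.single 2 (-k) (vecE v) :
          lp (fun _ : ℤ => EuclideanSpace ℂ (Fin n)) 2)) 2 := lp.memℓp _
      convert this using 1
      funext m
      simp [lp.single_apply, Pi.single_apply]
    · intro h
      have := congrFun h (-k)
      simp only [if_pos rfl] at this
      exact hv0 (by simpa [vecE] using congrArg WithLp.ofLp this)
    · intro m
      by_cases hm : m = -k
      · subst hm
        simp only [if_pos rfl, if_true]
        have : A.mulVec (vecE v) = lam • (vecE v : Fin n → ℂ) := hv
        rw [show vecE (A.mulVec (vecE v)) = lam • vecE v from congrArg vecE this]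
        rw [hμ]
        push_cast
        rw [add_smul]
        rw [sub_eq_iff_eq_add]
        ring_nf
        rw [neg_smul]
        abel
      · simp only [if_neg hm]
        simp [vecE, Matrix.mulVec_zero]
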